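/- arXiv:1403.4758 — 3 statements merged into one kernel-verified Lean document; each statement's English description precedes it below -/
import Mathlib

section
/- Fix λ = Σ_{i=1}^{n−1} m_i ω_i ∈ P⁺ and let I_odd = {i₁ < ⋯ < i_k} be the set of indices i with m_i odd. Define λ₁^max = Σ_{j=1}^{k} ((m_{i_j} + (−1)^j)/2) ω_{i_j} + Σ_{i ∉ I_odd} (m_i/2) ω_i and λ₂^max = λ − λ₁^max. Then for every positive root α of sl_n, min{λ₁^max(h_α), λ₂^max(h_α)} = ⌊λ(h_α)/2⌋. -/
/-- The first component `λ₁^max` of the maximal two-part partition of a weight with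
fundamental-weight coefficients `m`: at an index `i` with `m i` even it is `m i / 2`;
at the `j`-th odd index `i_j` (in increasing order) it is `(m_{i_j} + (-1)^j)/2`. -/
def lamMax (m : ℕ → ℕ) (i : ℕ) : ℕ :=
  if Odd (m i) then
    (if Odd (((Finset.Icc 1 i).filter fun t => Odd (m t)).card) then
      (m i - 1) / 2 else (m i + 1) / 2)
  else m i / 2

lemma lamMax_le (m : ℕ → ℕ) (k : ℕ) : lamMax m k ≤ m k := by
  unfold lamMax
  split
  · next h =>
    have : 1 ≤ m k := h.pos
    split <;> omega
  · omega

lemma key (m : ℕ → ℕ) (i : ℕ) (hi : 1 ≤ i) (j : ℕ) :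
    2 * (∑ k ∈ Finset.Icc i j, (lamMax m k : ℤ)) =
      (∑ k ∈ Finset.Icc i j, (m k : ℤ)) +
      (if Odd (((Finset.Icc i j).filter fun t => Odd (m t)).card) then
        (if Odd (((Finset.Icc 1 j).filter fun t => Odd (m t)).card) then (-1 : ℤ) else 1)
       else 0) := by
  induction j with
  | zero =>
      have h1 : Finset.Icc i 0 = ∅ := by
        apply Finset.Icc_eq_empty; omega
      have h2 : Finset.Icc 1 0 = ∅ := by
        apply Finset.Icc_eq_empty; omega
      simp [h1, h2]
  | succ j ih =>
      by_cases hij : i ≤ j + 1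
      · rw [Finset.sum_Icc_succ_top hij, Finset.sum_Icc_succ_top hij]
        have hins : Finset.Icc i (j+1) = insert (j+1) (Finset.Icc i j) := by
          exact (Finset.insert_Icc_right_eq_Icc_add_one hij).symm
        have hins1 : Finset.Icc 1 (j+1) = insert (j+1) (Finset.Icc 1 j) := by
          exact (Finset.insert_Icc_right_eq_Icc_add_one (by omega)).symm
        have hnm : j + 1 ∉ Finset.Icc i j := by simp
        have hnm1 : j + 1 ∉ Finset.Icc 1 j := by simp
        by_cases ho : Odd (m (j+1))
        · have hc : ((Finset.Icc i (j+1)).filter fun t => Odd (m t)).card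
              = ((Finset.Icc i j).filter fun t => Odd (m t)).card + 1 := by
            rw [hins, Finset.filter_insert, if_pos ho,
              Finset.card_insert_of_notMem (fun h => hnm (Finset.mem_of_mem_filter _ h))]
          have hc1 : ((Finset.Icc 1 (j+1)).filter fun t => Odd (m t)).card
              = ((Finset.Icc 1 j).filter fun t => Odd (m t)).card + 1 := by
            rw [hins1, Finset.filter_insert, if_pos ho,
              Finset.card_insert_of_notMem (fun h => hnm1 (Finset.mem_of_mem_filter _ h))]
          obtain ⟨t, ht⟩ := ho
          have hlam : (lamMax m (j+1) : ℤ)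
              = if Odd (((Finset.Icc 1 (j+1)).filter fun t => Odd (m t)).card)
                then (t : ℤ) else (t : ℤ) + 1 := by
            unfold lamMax
            rw [if_pos ⟨t, ht⟩]
            split <;> · push_cast [ht] <;> omega
          rw [hlam, hc, hc1, ht]
          simp only [Nat.odd_add_one]
          by_cases he : Odd (((Finset.Icc i j).filter fun t => Odd (m t)).card) <;>
          by_cases he1 : Odd (((Finset.Icc 1 j).filter fun t => Odd (m t)).card) <;>
          simp only [he, he1, if_pos, if_neg, not_true, not_false_iff, if_true, if_false] at ih ⊢ <;>
          push_cast [ht] at ih ⊢ <;> omega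
        · have hc : ((Finset.Icc i (j+1)).filter fun t => Odd (m t)).card
              = ((Finset.Icc i j).filter fun t => Odd (m t)).card := by
            rw [hins, Finset.filter_insert, if_neg ho]
          have hc1 : ((Finset.Icc 1 (j+1)).filter fun t => Odd (m t)).card
              = ((Finset.Icc 1 j).filter fun t => Odd (m t)).card := by
            rw [hins1, Finset.filter_insert, if_neg ho]
          rw [hc, hc1]
          have hev : m (j+1) % 2 = 0 := Nat.even_iff.mp (Nat.not_odd_iff_even.mp ho)
          have h2n : lamMax m (j+1) * 2 = m (j+1) := by
            unfold lamMax; rw [if_neg ho]; omega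
          have h2 : (lamMax m (j+1) : ℤ) * 2 = (m (j+1) : ℤ) := by
            exact_mod_cast congrArg (Nat.cast : ℕ → ℤ) h2n
          linarith [ih]
      · have h1 : Finset.Icc i (j+1) = ∅ := by apply Finset.Icc_eq_empty; omega
        simp [h1]

/-- with `λ₂^max = λ - λ₁^max`, for every positive root `α_{i,j}` of sl_n
(`1 ≤ i ≤ j ≤ n-1`), `min{λ₁^max(h_α), λ₂^max(h_α)} = ⌊λ(h_α)/2⌋`,
where `λ(h_{α_{i,j}}) = m_i + ⋯ + m_j`. -/
theorem stmt5 (n : ℕ) (m : ℕ → ℕ) (i j : ℕ) (hi : 1 ≤ i) (hij : i ≤ j) (hj : j ≤ n - 1) :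
    min (∑ k ∈ Finset.Icc i j, lamMax m k) (∑ k ∈ Finset.Icc i j, (m k - lamMax m k)) =
      (∑ k ∈ Finset.Icc i j, m k) / 2 := by
  have hAB : (∑ k ∈ Finset.Icc i j, lamMax m k) + (∑ k ∈ Finset.Icc i j, (m k - lamMax m k))
      = ∑ k ∈ Finset.Icc i j, m k := by
    rw [← Finset.sum_add_distrib]
    exact Finset.sum_congr rfl fun k _ => by have := lamMax_le m k; omega
  have hk := key m i hi j
  have hcast : (∑ k ∈ Finset.Icc i j, (lamMax m k : ℤ)) = ((∑ k ∈ Finset.Icc i j, lamMax m k : ℕ) : ℤ) := by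
    push_cast; rfl
  have hcast2 : (∑ k ∈ Finset.Icc i j, (m k : ℤ)) = ((∑ k ∈ Finset.Icc i j, m k : ℕ) : ℤ) := by
    push_cast; rfl
  rw [hcast, hcast2] at hk
  set A := ∑ k ∈ Finset.Icc i j, lamMax m k
  set B := ∑ k ∈ Finset.Icc i j, (m k - lamMax m k)
  set S := ∑ k ∈ Finset.Icc i j, m k
  split_ifs at hk <;> omega
end

section
/- With λ₁^max and λ₂^max as defined from λ ∈ P⁺ (the maximal partition of λ into two dominant parts), the pair (λ₁^max, λ₂^max) is a maximum of the poset P(λ,2): for every (μ₁, μ₂) ∈ P⁺ × P⁺ with μ₁ + μ₂ = λ and every positive root α, min{μ₁(h_α), μ₂(h_α)} ≤ min{λ₁^max(h_α), λ₂^max(h_α)}. -/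
namespace Stmt6Aux

/-- number of odd coefficients among indices `1..k` -/
def c (m : ℕ → ℕ) (k : ℕ) : ℕ := ((Finset.Icc 1 k).filter fun t => Odd (m t)).card

/-- alternating sign -/
def s (m : ℕ → ℕ) (k : ℕ) : ℤ := if Odd (c m k) then -1 else 1

lemma lamMax_le (m : ℕ → ℕ) (k : ℕ) : lamMax m k ≤ m k := by
  unfold lamMax
  rcases Nat.even_or_odd (m k) with h | h
  · rw [if_neg (Nat.not_odd_iff_even.2 h)]
    omega
  · obtain ⟨t, ht⟩ := id h
    rw [if_pos h]
    split <;> omega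

lemma f_eq (m : ℕ → ℕ) (k : ℕ) :
    2 * (lamMax m k : ℤ) - m k = if Odd (m k) then s m k else 0 := by
  unfold lamMax s c
  rcases Nat.even_or_odd (m k) with h | h
  · have h' : ¬ Odd (m k) := Nat.not_odd_iff_even.2 h
    obtain ⟨t, ht⟩ := h
    simp only [h', if_false]
    push_cast
    omega
  · obtain ⟨t, ht⟩ := id h
    rw [if_pos h]
    split <;> (push_cast; omega)

lemma s_sq (m : ℕ → ℕ) (k : ℕ) : s m k = 1 ∨ s m k = -1 := by
  unfold s; split <;> simp

lemma c_succ (m : ℕ → ℕ) (k : ℕ) :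
    c m (k + 1) = if Odd (m (k + 1)) then c m k + 1 else c m k := by
  unfold c
  rw [← Finset.insert_Icc_right_eq_Icc_add_one (by omega : 1 ≤ k + 1), Finset.filter_insert]
  have hnm : k + 1 ∉ (Finset.Icc 1 k).filter fun t => Odd (m t) := by
    intro hmem
    have := (Finset.mem_filter.1 hmem).1
    rw [Finset.mem_Icc] at this
    omega
  by_cases hodd : Odd (m (k + 1)) <;> simp [hodd, Finset.card_insert_of_notMem hnm]

lemma s_succ (m : ℕ → ℕ) (k : ℕ) :
    s m (k + 1) = if Odd (m (k + 1)) then - s m k else s m k := by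
  unfold s
  rw [c_succ]
  split
  · rcases Nat.even_or_odd (c m k) with h | h
    · simp [Nat.not_odd_iff_even.2 h, Nat.odd_add_one, Nat.not_even_iff_odd]
    · simp [h, Nat.odd_add_one, Nat.not_odd_iff_even, Nat.odd_iff.1 h]
  · rfl

lemma sum_key (m : ℕ → ℕ) (i : ℕ) (hi : 1 ≤ i) : ∀ d : ℕ,
    2 * (∑ k ∈ Finset.Icc i (i - 1 + d), (2 * (lamMax m k : ℤ) - m k)) =
      s m (i - 1 + d) - s m (i - 1)
  | 0 => by
      rw [Finset.Icc_eq_empty (by omega)]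
      simp
  | d + 1 => by
      have h : i - 1 + (d + 1) = (i - 1 + d) + 1 := by omega
      rw [h, ← Finset.insert_Icc_right_eq_Icc_add_one (by omega : i ≤ (i - 1 + d) + 1),
        Finset.sum_insert (by simp)]
      have ih := sum_key m i hi d
      have hf := f_eq m ((i - 1 + d) + 1)
      have hs := s_succ m (i - 1 + d)
      by_cases hodd : Odd (m ((i - 1 + d) + 1))
      · rw [if_pos hodd] at hf hs
        linarith
      · rw [if_neg hodd] at hf hs
        linarith

end Stmt6Aux

/-- `(λ₁^max, λ₂^max)` is a maximum of the poset `P(λ,2)`: for every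
decomposition `μ₁ + μ₂ = λ` into dominant weights and every positive root `α_{i,j}`
(`1 ≤ i ≤ j ≤ n-1`, with `λ(h_{α_{i,j}}) = m_i + ⋯ + m_j`),
`min{μ₁(h_α), μ₂(h_α)} ≤ min{λ₁^max(h_α), λ₂^max(h_α)}`. -/
theorem stmt6 (n : ℕ) (m μ₁ μ₂ : ℕ → ℕ) (hsum : ∀ t, μ₁ t + μ₂ t = m t)
    (i j : ℕ) (hi : 1 ≤ i) (hij : i ≤ j) (hj : j ≤ n - 1) :
    min (∑ k ∈ Finset.Icc i j, μ₁ k) (∑ k ∈ Finset.Icc i j, μ₂ k) ≤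
      min (∑ k ∈ Finset.Icc i j, lamMax m k)
        (∑ k ∈ Finset.Icc i j, (m k - lamMax m k)) := by
  have hAC : (∑ k ∈ Finset.Icc i j, lamMax m k) +
      (∑ k ∈ Finset.Icc i j, (m k - lamMax m k)) = ∑ k ∈ Finset.Icc i j, m k := by
    rw [← Finset.sum_add_distrib]
    refine Finset.sum_congr rfl fun k _ => ?_
    have := Stmt6Aux.lamMax_le m k
    omega
  have hS : (∑ k ∈ Finset.Icc i j, μ₁ k) + (∑ k ∈ Finset.Icc i j, μ₂ k) =
      ∑ k ∈ Finset.Icc i j, m k := by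
    rw [← Finset.sum_add_distrib]
    exact Finset.sum_congr rfl fun k _ => hsum k
  have hd := Stmt6Aux.sum_key m i hi (j - i + 1)
  have hij' : i - 1 + (j - i + 1) = j := by omega
  rw [hij'] at hd
  have h1 : (∑ k ∈ Finset.Icc i j, (2 * (lamMax m k : ℤ) - m k)) =
      2 * ((∑ k ∈ Finset.Icc i j, lamMax m k : ℕ) : ℤ) -
        ((∑ k ∈ Finset.Icc i j, m k : ℕ) : ℤ) := by
    push_cast
    rw [Finset.sum_sub_distrib, Finset.mul_sum]
  rw [h1] at hd
  obtain h2 | h2 := Stmt6Aux.s_sq m j <;> obtain h3 | h3 := Stmt6Aux.s_sq m (i - 1) <;>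
    rw [h2, h3] at hd <;> omega
end

section
/- Pieri rule for one-column shapes in type A: for a dominant weight λ = Σ m_i ω_i of sl_n and j ∈ {1,…,n−1}, the highest weight vectors of V(λ) ⊗ V(ω_j) are parameterized by the set T of strictly increasing tuples 1 ≤ b₁ < b₂ < ⋯ < b_j ≤ n such that whenever b_{i−1} ≠ b_i − 1 (including the case i = 1 with b₀ := 0) one has m_{b_i − 1} ≠ 0; moreover V(λ) ⊗ V(ω_j) ≅ ⊕_{(b₁<⋯<b_j) ∈ T} V(λ + ω_j − Σ_{i=1}^{j}(ω_{b_i} − ω_{b_i − 1}))... equivalently, s_λ · e_j = Σ_τ s_τ over partitions τ obtained from λ by adding a vertical strip of size j. -/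
open MvPolynomial

/-- The alternant `a_μ = det(x_t^{μ_s}) = Σ_σ sign(σ) Π_t x_{σ t}^{μ t}`. -/
noncomputable def alternant (n : ℕ) (μ : Fin n → ℕ) : MvPolynomial (Fin n) ℤ :=
  ∑ σ : Equiv.Perm (Fin n),
    (Equiv.Perm.sign σ : ℤ) • ∏ t : Fin n, (X (σ t) : MvPolynomial (Fin n) ℤ) ^ μ t

/-- The staircase `δ = (n-1, n-2, …, 0)`. -/
def staircase (n : ℕ) : Fin n → ℕ := fun t => n - 1 - t

lemma alternant_eq_det (n : ℕ) (μ : Fin n → ℕ) :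
    alternant n μ = (Matrix.of fun s t : Fin n => (X s : MvPolynomial (Fin n) ℤ) ^ μ t).det := by
  rw [Matrix.det_apply, alternant]
  refine Finset.sum_congr rfl fun σ _ => ?_
  simp [Units.smul_def]

lemma alternant_eq_zero {n : ℕ} {μ : Fin n → ℕ} {t t' : Fin n} (h : t ≠ t') (he : μ t = μ t') :
    alternant n μ = 0 := by
  rw [alternant_eq_det]
  exact Matrix.det_zero_of_column_eq h (by simp [he])

lemma alternant_mul_esymm (n j : ℕ) (μ : Fin n → ℕ) :
    alternant n μ * MvPolynomial.esymm (Fin n) ℤ j =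
      ∑ S ∈ Finset.powersetCard j (Finset.univ : Finset (Fin n)),
        alternant n (fun t => μ t + if t ∈ S then 1 else 0) := by
  unfold alternant
  rw [MvPolynomial.esymm, Finset.sum_mul, Finset.sum_comm]
  refine Finset.sum_congr rfl fun σ _ => ?_
  rw [smul_mul_assoc, Finset.mul_sum, Finset.smul_sum]
  refine Finset.sum_nbij' (fun S => S.map σ.symm.toEmbedding) (fun T => T.map σ.toEmbedding)
    ?_ ?_ ?_ ?_ ?_
  · intro S hS
    simp only [Finset.mem_powersetCard_univ, Finset.card_map] at *
    exact hS
  · intro T hT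
    simp only [Finset.mem_powersetCard_univ, Finset.card_map] at *
    exact hT
  · intro S hS; ext x; simp
  · intro T hT; ext x; simp
  · intro S hS
    congr 1
    have h1 : ∀ t : Fin n, (X (σ t) : MvPolynomial (Fin n) ℤ) ^ (μ t + if t ∈ S.map σ.symm.toEmbedding then 1 else 0)
        = X (σ t) ^ μ t * (if t ∈ S.map σ.symm.toEmbedding then X (σ t) else 1) := by
      intro t; split_ifs <;> simp [pow_add]
    simp_rw [h1]
    rw [Finset.prod_mul_distrib, Finset.prod_ite_mem, Finset.univ_inter]
    congr 1
    rw [Finset.prod_map]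
    simp

lemma antitone_of_adj {n : ℕ} (g : Fin n → ℕ)
    (h : ∀ (s : ℕ) (hs : s + 1 < n), g ⟨s+1, hs⟩ ≤ g ⟨s, by omega⟩) :
    ∀ a b : Fin n, a ≤ b → g b ≤ g a := by
  have key : ∀ (k : ℕ) (a : Fin n) (hk : a.1 + k < n), g ⟨a.1 + k, hk⟩ ≤ g a := by
    intro k
    induction k with
    | zero => intro a hk; simp
    | succ m ih =>
      intro a hk
      have h1 := h (a.1 + m) (by omega)
      have h2 := ih a (by omega)
      calc g ⟨a.1 + (m+1), hk⟩ ≤ g ⟨a.1 + m, by omega⟩ := h1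
        _ ≤ g a := h2
  intro a b hab
  have : b = ⟨a.1 + (b.1 - a.1), by omega⟩ := by
    apply Fin.ext; simp; omega
  rw [this]
  exact key _ a _

/-- Pieri rule for one-column shapes, stated for Schur polynomials via
alternants, `s_λ = a_{λ+δ}/a_δ`: for `j ∈ {1,…,n-1}`, `s_λ · e_j` is the
multiplicity-free sum of `s_ν` over partitions `ν` obtained from `λ` by adding a vertical
strip of size `j` (i.e. `ν` a partition, `λ_t ≤ ν_t ≤ λ_t + 1`, `Σ(ν-λ) = j`).
Equivalently, `a_{λ+δ} · e_j = Σ_ν a_{ν+δ}`. -/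
theorem stmt12 (n j : ℕ) (hj1 : 1 ≤ j) (hj2 : j ≤ n - 1) (l : Fin n → ℕ) (hl : Antitone l) :
    alternant n (fun t => l t + staircase n t) * MvPolynomial.esymm (Fin n) ℤ j =
      ∑ ν ∈ (Fintype.piFinset fun t : Fin n => Finset.range (l t + 2)).filter
          (fun ν => (∀ t t' : Fin n, t ≤ t' → ν t' ≤ ν t) ∧
            (∀ t, l t ≤ ν t ∧ ν t ≤ l t + 1) ∧ (∑ t, (ν t - l t)) = j),
        alternant n fun t => ν t + staircase n t := by
  classical
  rw [alternant_mul_esymm]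
  have hzero : ∀ S ∈ Finset.powersetCard j (Finset.univ : Finset (Fin n)),
      alternant n (fun t => (fun t => l t + staircase n t) t + if t ∈ S then 1 else 0) ≠ 0 →
      (∀ t t' : Fin n, t ≤ t' →
        (l t' + if t' ∈ S then 1 else 0) ≤ (l t + if t ∈ S then 1 else 0)) := by
    intro S _ hne
    by_contra hbad
    push_neg at hbad
    obtain ⟨t, t', htt, hlt⟩ := hbad
    set ν : Fin n → ℕ := fun t => l t + if t ∈ S then 1 else 0 with hν
    have : ¬ (∀ (s : ℕ) (hs : s + 1 < n), ν ⟨s+1, hs⟩ ≤ ν ⟨s, by omega⟩) :=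
      fun hh => absurd (antitone_of_adj ν hh t t' htt) (not_le.2 hlt)
    push_neg at this
    obtain ⟨s, hs, hviol⟩ := this
    apply hne
    have hsn : s < n := by omega
    set a : Fin n := ⟨s, hsn⟩ with ha
    set b : Fin n := ⟨s+1, hs⟩ with hb
    have hab : a ≠ b := by simp [ha, hb, Fin.ext_iff]
    refine alternant_eq_zero (t := a) (t' := b) hab ?_
    have hls : l b ≤ l a := hl (by simp [ha, hb, Fin.le_def])
    have hb1 : l a ≤ ν a := Nat.le_add_right _ _
    have hb2 : ν b ≤ l b + 1 := by
      simp only [hν]; split_ifs <;> omega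
    have hviol' : ν a < ν b := hviol
    have heq : ν b = ν a + 1 := by omega
    have hrearr : ∀ x : Fin n, (l x + staircase n x) + (if x ∈ S then 1 else 0)
        = ν x + staircase n x := fun x => by simp only [hν]; ring
    show (l a + staircase n a) + (if a ∈ S then 1 else 0)
        = (l b + staircase n b) + (if b ∈ S then 1 else 0)
    rw [hrearr, hrearr]
    have hsa : staircase n a = n - 1 - s := rfl
    have hsb : staircase n b = n - 1 - (s+1) := rfl
    omega
  rw [← Finset.sum_filter_of_ne hzero]
  refine Finset.sum_nbij' (fun S => fun t => l t + if t ∈ S then 1 else 0)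
    (fun ν => Finset.univ.filter (fun t => ν t = l t + 1)) ?_ ?_ ?_ ?_ ?_
  · intro S hS
    simp only [Finset.mem_filter, Finset.mem_powersetCard_univ] at hS
    obtain ⟨hcard, hgood⟩ := hS
    simp only [Finset.mem_filter, Fintype.mem_piFinset, Finset.mem_range]
    refine ⟨fun t => by split_ifs <;> omega, hgood, fun t => by split_ifs <;> omega, ?_⟩
    have : ∀ t : Fin n, (l t + if t ∈ S then 1 else 0) - l t = if t ∈ S then 1 else 0 := by
      intro t; split_ifs <;> omega
    simp_rw [this]
    rw [Finset.sum_ite_mem, Finset.univ_inter, Finset.sum_const, smul_eq_mul, mul_one]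
    exact hcard
  · intro ν hν
    simp only [Finset.mem_filter, Fintype.mem_piFinset, Finset.mem_range] at hν
    obtain ⟨hpi, hanti, hbd, hsum⟩ := hν
    simp only [Finset.mem_filter, Finset.mem_powersetCard_univ]
    constructor
    · rw [Finset.card_filter]
      rw [← hsum]
      refine Finset.sum_congr rfl fun t _ => ?_
      have := hbd t; split_ifs <;> omega
    · intro t t' htt
      have h1 := hanti t t' htt
      have h2 := hbd t
      have h3 := hbd t'
      simp only [Finset.mem_filter, Finset.mem_univ, true_and]
      split_ifs <;> omega
  · intro S _
    ext t
    simp only [Finset.mem_filter, Finset.mem_univ, true_and]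
    by_cases h : t ∈ S <;> simp [h]
  · intro ν hν
    simp only [Finset.mem_filter, Fintype.mem_piFinset, Finset.mem_range] at hν
    obtain ⟨hpi, hanti, hbd, hsum⟩ := hν
    funext t
    simp only [Finset.mem_filter, Finset.mem_univ, true_and]
    have := hbd t; split_ifs <;> omega
  · intro S _
    congr 1
    funext t
    simp only []
    omega
end
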